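/- arXiv:2510.16910 — 3 statements merged into one kernel-verified Lean document; each statement's English description precedes it below -/
import Mathlib

section
/- Let K be a compact Hausdorff space and φ a homeomorphism of K. Suppose T is the weighted composition operator Tg = w·(g∘φ) on C(K) with w nonvanishing and σ(T) ⊆ 𝕋. Then there exists a point s ∈ K such that |w_n(s)| ≤ 1 and |w_n(φ^{-n}(s))| ≥ 1 for all n ∈ ℕ, where w_n = w·(w∘φ)···(w∘φ^{n−1}). -/
open Filter Finset Topology

lemma aux_specrad_le_one {A : Type*} [NormedRing A] [NormedAlgebra ℂ A] (a : A)
    (h : spectrum ℂ a ⊆ Metric.sphere (0 : ℂ) 1) : spectralRadius ℂ a ≤ 1 := by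
  refine iSup₂_le fun k hk => ?_
  have h1 : ‖k‖ = 1 := by simpa using h hk
  have : ‖k‖₊ ≤ 1 := by
    rw [← NNReal.coe_le_coe, coe_nnnorm, h1]; norm_num
  exact_mod_cast this

lemma aux_gelfand {A : Type*} [NormedRing A] [NormedAlgebra ℂ A] [CompleteSpace A] (a : A)
    (h : spectralRadius ℂ a ≤ 1) {ε : ℝ} (hε : 0 < ε) :
    ∀ᶠ n : ℕ in atTop, ‖a ^ n‖ ≤ Real.exp (ε * n) := by
  have htd := spectrum.pow_norm_pow_one_div_tendsto_nhds_spectralRadius a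
  have hlt : spectralRadius ℂ a < ENNReal.ofReal (Real.exp ε) := by
    refine lt_of_le_of_lt h ?_
    rw [← ENNReal.ofReal_one]
    exact (ENNReal.ofReal_lt_ofReal_iff (Real.exp_pos ε)).mpr
      (by simpa using Real.exp_lt_exp.mpr hε)
  have hev : ∀ᶠ n : ℕ in atTop,
      ENNReal.ofReal (‖a ^ n‖ ^ (1 / n : ℝ)) < ENNReal.ofReal (Real.exp ε) :=
    htd.eventually (Filter.Tendsto.eventually_lt_const hlt tendsto_id) |>.mono (fun n hn => hn)
  filter_upwards [hev, eventually_ge_atTop 1] with n hn hn1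
  have hnn : (0:ℝ) ≤ ‖a ^ n‖ := norm_nonneg _
  have h2 : ‖a ^ n‖ ^ (1 / n : ℝ) < Real.exp ε :=
    (ENNReal.ofReal_lt_ofReal_iff (Real.exp_pos ε)).mp hn
  have hne : (n : ℝ) ≠ 0 := by positivity
  have h3 : (‖a ^ n‖ ^ (1 / n : ℝ)) ^ (n : ℝ) ≤ (Real.exp ε) ^ (n : ℝ) :=
    Real.rpow_le_rpow (Real.rpow_nonneg hnn _) h2.le (by positivity)
  rw [← Real.rpow_mul hnn, one_div, inv_mul_cancel₀ hne, Real.rpow_one] at h3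
  calc ‖a ^ n‖ ≤ (Real.exp ε) ^ (n:ℝ) := h3
    _ = Real.exp (ε * n) := by
        rw [Real.rpow_def_of_pos (Real.exp_pos ε), Real.log_exp]
set_option maxHeartbeats 1000000 in
/-- If `Tg = w·(g∘φ)` with nonvanishing `w` has spectrum contained in the unit circle,
then there is a point `s ∈ K` with `|wₙ(s)| ≤ 1` and `|wₙ(φ⁻ⁿ(s))| ≥ 1` for all `n`. -/
theorem stmt10 {K : Type*} [TopologicalSpace K] [CompactSpace K] [T2Space K] [Nonempty K]
    (φ : K ≃ₜ K) (w : C(K, ℂ)) (hw : ∀ t, w t ≠ 0)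
    (T : C(K, ℂ) →L[ℂ] C(K, ℂ))
    (hT : ∀ (g : C(K, ℂ)) (t : K), T g t = w t * g (φ t))
    (wn : ℕ → C(K, ℂ))
    (hwn : ∀ (n : ℕ) (t : K), wn n t = ∏ i ∈ Finset.range n, w ((⇑φ)^[i] t))
    (hσ : spectrum ℂ T ⊆ Metric.sphere (0 : ℂ) 1) :
    ∃ s : K, ∀ n : ℕ, ‖wn n s‖ ≤ 1 ∧ 1 ≤ ‖wn n ((⇑φ.symm)^[n] s)‖ := by
  -- basic nonvanishing
  have hwnne : ∀ (n : ℕ) (t : K), wn n t ≠ 0 := by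
    intro n t
    rw [hwn]
    exact Finset.prod_ne_zero_iff.mpr fun i _ => hw _
  have hwn_pos : ∀ (n : ℕ) (t : K), 0 < ‖wn n t‖ :=
    fun n t => norm_pos_iff.mpr (hwnne n t)
  -- cocycle identities
  have hwn_succ : ∀ (n : ℕ) (t : K), wn (n+1) t = wn n t * w ((⇑φ)^[n] t) := by
    intro n t; rw [hwn, hwn, Finset.prod_range_succ]
  have hwn_succ' : ∀ (n : ℕ) (t : K), wn (n+1) t = w t * wn n (φ t) := by
    intro n t
    have hc : ∀ i ∈ Finset.range n, w ((⇑φ)^[i+1] t) = w ((⇑φ)^[i] (φ t)) :=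
      fun i _ => by rw [Function.iterate_succ_apply]
    rw [hwn, hwn, Finset.prod_range_succ', Finset.prod_congr rfl hc]
    simp [mul_comm]
  have hwn_zero : ∀ t : K, wn 0 t = 1 := by intro t; simp [hwn]
  -- left inverse iteration
  have hLI : ∀ (n : ℕ) (t : K), (⇑φ.symm)^[n] ((⇑φ)^[n] t) = t :=
    fun n => (Function.LeftInverse.iterate φ.symm_apply_apply n)
  have hRI : ∀ (n : ℕ) (t : K), (⇑φ)^[n] ((⇑φ.symm)^[n] t) = t :=
    fun n => (Function.LeftInverse.iterate φ.apply_symm_apply n)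
  -- powers of T
  have hTn : ∀ (n : ℕ) (g : C(K, ℂ)) (t : K), (T ^ n) g t = wn n t * g ((⇑φ)^[n] t) := by
    intro n
    induction n with
    | zero => intro g t; simp [hwn_zero]
    | succ n ih =>
      intro g t
      rw [pow_succ', ContinuousLinearMap.mul_apply, hT, ih, hwn_succ',
        ← Function.iterate_succ_apply]
      ring
  -- inverse operator
  let V : C(K, ℂ) := ⟨fun t => (w (φ.symm t))⁻¹,
    ((w.continuous.comp φ.symm.continuous).inv₀ fun t => hw _)⟩
  let L : C(K, ℂ) →ₗ[ℂ] C(K, ℂ) :=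
    { toFun := fun g => V * g.comp (φ.symm : C(K, K))
      map_add' := fun g h => by ext t; simp [mul_add]
      map_smul' := fun c g => by ext t; simp [mul_comm, mul_left_comm] }
  have hLb : ∀ g : C(K, ℂ), ‖L g‖ ≤ ‖V‖ * ‖g‖ := by
    intro g
    refine le_trans (norm_mul_le _ _) ?_
    gcongr
    exact (ContinuousMap.norm_le _ (norm_nonneg g)).mpr
      fun t => ContinuousMap.norm_coe_le_norm g _
  let S : C(K, ℂ) →L[ℂ] C(K, ℂ) := L.mkContinuous ‖V‖ hLb
  have hS : ∀ (g : C(K, ℂ)) (t : K), S g t = (w (φ.symm t))⁻¹ * g (φ.symm t) := fun g t => rfl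
  have hST : S * T = 1 := by
    ext g t
    simp only [ContinuousLinearMap.mul_apply, hS, hT, ContinuousLinearMap.one_apply]
    rw [φ.apply_symm_apply, ← mul_assoc, inv_mul_cancel₀ (hw _), one_mul]
  have hTS : T * S = 1 := by
    ext g t
    simp only [ContinuousLinearMap.mul_apply, hT, hS, ContinuousLinearMap.one_apply]
    rw [φ.symm_apply_apply, ← mul_assoc, mul_inv_cancel₀ (hw t), one_mul]
  let u : (C(K, ℂ) →L[ℂ] C(K, ℂ))ˣ := ⟨T, S, hTS, hST⟩
  have hσS : spectrum ℂ S ⊆ Metric.sphere (0 : ℂ) 1 := by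
    intro z hz
    have hz0 : z ≠ 0 := spectrum.ne_zero_of_mem_of_unit (a := u⁻¹) hz
    have h2 : (z⁻¹ : ℂ) ∈ spectrum ℂ T := by
      have := (spectrum.inv_mem_iff (r := Units.mk0 z hz0) (a := u⁻¹)).mp hz
      exact this
    have h3 : ‖z⁻¹‖ = 1 := by simpa using hσ h2
    rw [norm_inv] at h3
    simp only [Metric.mem_sphere, dist_zero_right]
    rw [← inv_inv ‖z‖, h3, inv_one]
  have hSn : ∀ (n : ℕ) (g : C(K, ℂ)) (t : K),
      (S ^ n) g t = (wn n ((⇑φ.symm)^[n] t))⁻¹ * g ((⇑φ.symm)^[n] t) := by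
    intro n
    induction n with
    | zero => intro g t; simp [hwn_zero]
    | succ n ih =>
      intro g t
      rw [pow_succ, ContinuousLinearMap.mul_apply, ih, hS]
      have h1 : (⇑φ.symm)^[n+1] t = φ.symm ((⇑φ.symm)^[n] t) :=
        Function.iterate_succ_apply' _ _ _
      rw [h1, hwn_succ', φ.apply_symm_apply, mul_inv]
      ring
  -- Gelfand bounds
  have hone : ‖(1 : C(K, ℂ))‖ = 1 := norm_one
  have hub : ∀ ε : ℝ, 0 < ε → ∀ᶠ n : ℕ in atTop, ∀ t : K, ‖wn n t‖ ≤ Real.exp (ε * n) := by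
    intro ε hε
    filter_upwards [aux_gelfand T (aux_specrad_le_one T hσ) hε] with n hn t
    have h1 : wn n = (T ^ n) 1 := by
      ext s; rw [hTn]; simp
    calc ‖wn n t‖ ≤ ‖wn n‖ := ContinuousMap.norm_coe_le_norm _ t
      _ = ‖(T ^ n) 1‖ := by rw [h1]
      _ ≤ ‖T ^ n‖ * ‖(1 : C(K, ℂ))‖ := (T ^ n).le_opNorm 1
      _ = ‖T ^ n‖ := by rw [hone, mul_one]
      _ ≤ Real.exp (ε * n) := hn
  have hlb : ∀ ε : ℝ, 0 < ε →
      ∀ᶠ n : ℕ in atTop, ∀ t : K, Real.exp (-(ε * n)) ≤ ‖wn n t‖ := by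
    intro ε hε
    filter_upwards [aux_gelfand S (aux_specrad_le_one S hσS) hε] with n hn t
    have h2 := hSn n 1 ((⇑φ)^[n] t)
    rw [hLI] at h2
    have h1 : ‖(wn n t)⁻¹‖ ≤ Real.exp (ε * n) := by
      calc ‖(wn n t)⁻¹‖ = ‖(S ^ n) (1 : C(K, ℂ)) ((⇑φ)^[n] t)‖ := by rw [h2]; simp
        _ ≤ ‖(S ^ n) (1 : C(K, ℂ))‖ := ContinuousMap.norm_coe_le_norm _ _
        _ ≤ ‖S ^ n‖ * ‖(1 : C(K, ℂ))‖ := (S ^ n).le_opNorm 1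
        _ = ‖S ^ n‖ := by rw [hone, mul_one]
        _ ≤ Real.exp (ε * n) := hn
    rw [norm_inv] at h1
    rw [Real.exp_neg]
    exact inv_le_of_inv_le₀ (hwn_pos n t) h1
  -- two-sided orbit
  obtain ⟨y⟩ := ‹Nonempty K›
  set e : Equiv.Perm K := φ.toEquiv with he
  set o : ℤ → K := fun m => (e ^ m) y with ho
  have ho1 : ∀ m : ℤ, o (m + 1) = φ (o m) := by
    intro m
    have h1 : e ^ (m + 1) = e * e ^ m := by rw [add_comm, zpow_one_add]
    simp only [ho, h1, Equiv.Perm.mul_apply]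
    rfl
  have hoiter : ∀ (n : ℕ) (m : ℤ), (⇑φ)^[n] (o m) = o (m + n) := by
    intro n
    induction n with
    | zero => intro m; simp
    | succ n ih =>
      intro m
      have hc : (m + ((n + 1 : ℕ) : ℤ)) = (m + (n : ℤ)) + 1 := by push_cast; ring
      rw [Function.iterate_succ_apply', ih, hc, ho1]
  have hoiter' : ∀ (n : ℕ) (m : ℤ), (⇑φ.symm)^[n] (o m) = o (m - n) := by
    intro n m
    have h1 : (⇑φ)^[n] (o (m - n)) = o m := by rw [hoiter]; congr 1; ring
    calc (⇑φ.symm)^[n] (o m) = (⇑φ.symm)^[n] ((⇑φ)^[n] (o (m - n))) := by rw [h1]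
      _ = o (m - n) := hLI n _
  set g0 : K → ℝ := fun t => Real.log ‖w t‖ with hg0
  set p : ℤ → ℝ := fun m =>
    (∑ i ∈ Finset.range m.toNat, g0 (o i)) -
      ∑ i ∈ Finset.range (-m).toNat, g0 (o (-(i : ℤ) - 1)) with hpdef
  have hp0 : p 0 = 0 := by simp [hpdef]
  have hp : ∀ m : ℤ, p (m + 1) = p m + g0 (o m) := by
    intro m
    rcases le_or_gt 0 m with hm | hm
    · obtain ⟨n, rfl⟩ := Int.eq_ofNat_of_zero_le hm
      have h1 : ((n : ℤ) + 1).toNat = n + 1 := by omega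
      have h2 : (-(n : ℤ)).toNat = 0 := by omega
      have h3 : (-((n : ℤ) + 1)).toNat = 0 := by omega
      have h4 : ((n : ℤ)).toNat = n := by omega
      simp only [hpdef, h1, h2, h3, h4, Finset.range_zero, Finset.sum_empty, sub_zero,
        Finset.sum_range_succ]
    · obtain ⟨n, rfl⟩ : ∃ n : ℕ, m = -((n : ℤ) + 1) := ⟨(-m - 1).toNat, by omega⟩
      have h1 : (-((n : ℤ) + 1) + 1).toNat = 0 := by omega
      have h2 : (-(-((n : ℤ) + 1) + 1)).toNat = n := by omega
      have h3 : (-((n : ℤ) + 1)).toNat = 0 := by omega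
      have h4 : (-(-((n : ℤ) + 1))).toNat = n + 1 := by omega
      simp only [hpdef, h1, h2, h3, h4, Finset.range_zero, Finset.sum_empty, zero_sub,
        Finset.sum_range_succ]
      have h5 : (-(n : ℤ) - 1) = -((n : ℤ) + 1) := by ring
      rw [h5]
      ring
  have hchunk : ∀ (m : ℤ) (n : ℕ),
      p (m + n) = p m + ∑ i ∈ Finset.range n, g0 (o (m + i)) := by
    intro m n
    induction n with
    | zero => simp
    | succ n ih =>
      have hc : (m + ((n + 1 : ℕ) : ℤ)) = (m + (n : ℤ)) + 1 := by push_cast; ring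
      rw [hc, hp, ih, Finset.sum_range_succ, add_assoc]
  have hlog : ∀ (n : ℕ) (t : K),
      Real.log ‖wn n t‖ = ∑ i ∈ Finset.range n, g0 ((⇑φ)^[i] t) := by
    intro n t
    rw [hwn, norm_prod]
    exact Real.log_prod fun i _ => norm_ne_zero_iff.mpr (hw _)
  have hSp : ∀ (m : ℤ) (n : ℕ), Real.log ‖wn n (o m)‖ = p (m + n) - p m := by
    intro m n
    rw [hlog, hchunk, add_sub_cancel_left]
    exact Finset.sum_congr rfl fun i _ => by rw [hoiter]
  -- key: near-optimal points
  have key : ∀ ε : ℝ, 0 < ε → ∃ x : K, ∀ n : ℕ,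
      Real.log ‖wn n x‖ ≤ 2 * ε * n ∧
      -(2 * ε * n) ≤ Real.log ‖wn n ((⇑φ.symm)^[n] x)‖ := by
    intro ε hε
    obtain ⟨N, hN⟩ : ∃ N : ℕ, ∀ n, N ≤ n → ∀ t, |Real.log ‖wn n t‖| ≤ ε * n := by
      obtain ⟨N, hN⟩ := eventually_atTop.mp ((hub ε hε).and (hlb ε hε))
      refine ⟨N, fun n hn t => ?_⟩
      obtain ⟨h1, h2⟩ := hN n hn
      rw [abs_le]
      constructor
      · rw [← Real.log_exp (-(ε * n))]
        exact Real.log_le_log (Real.exp_pos _) (h2 t)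
      · rw [← Real.log_exp (ε * n)]
        exact Real.log_le_log (hwn_pos n t) (h1 t)
    have hpb : ∀ m : ℤ, N ≤ m.natAbs → |p m| ≤ ε * m.natAbs := by
      intro m hm
      rcases le_or_gt 0 m with h | h
      · have hmm : ((m.natAbs : ℕ) : ℤ) = m := by omega
        have h1 := hSp 0 m.natAbs
        rw [hp0, zero_add, hmm, sub_zero] at h1
        have h2 : o 0 = y := by simp [ho]
        rw [h2] at h1
        rw [← h1]
        exact hN m.natAbs hm y
      · have hmm : m + ((m.natAbs : ℕ) : ℤ) = 0 := by omega
        have h1 := hSp m m.natAbs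
        rw [hmm, hp0, zero_sub] at h1
        have h2 : |p m| = |Real.log ‖wn m.natAbs (o m)‖| := by
          rw [h1, abs_neg]
        rw [h2]
        exact hN m.natAbs hm _
    set C : ℝ := ∑ m ∈ Finset.Icc (-(N : ℤ)) N, |p m| with hCdef
    have hC0 : 0 ≤ C := Finset.sum_nonneg fun m _ => abs_nonneg _
    have hCb : ∀ m : ℤ, |p m| ≤ ε * m.natAbs + C := by
      intro m
      rcases le_or_gt N m.natAbs with h | h
      · exact (hpb m h).trans (by linarith)
      · have hms : m ∈ Finset.Icc (-(N : ℤ)) N := by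
          rw [Finset.mem_Icc]; omega
        have h1 : |p m| ≤ C :=
          Finset.single_le_sum (f := fun m => |p m|) (fun i _ => abs_nonneg _) hms
        have h2 : 0 ≤ ε * (m.natAbs : ℝ) := by positivity
        linarith
    set Q : ℤ → ℝ := fun m => p m - 2 * ε * m.natAbs with hQdef
    have hQ0 : Q 0 = 0 := by simp [hQdef, hp0]
    have hQb : ∀ m : ℤ, Q m ≤ C - ε * m.natAbs := by
      intro m
      have h2 : p m ≤ ε * m.natAbs + C := (abs_le.mp (hCb m)).2
      simp only [hQdef]
      linarith
    set B : ℕ := ⌈C / ε⌉₊ with hBdef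
    set s : Finset ℤ := Finset.Icc (-(B : ℤ)) (B : ℤ) with hsdef
    have h0s : (0 : ℤ) ∈ s := by rw [hsdef, Finset.mem_Icc]; omega
    obtain ⟨j, hjs, hj⟩ := Finset.exists_max_image s Q ⟨0, h0s⟩
    have hjall : ∀ m : ℤ, Q m ≤ Q j := by
      intro m
      by_cases hm : m ∈ s
      · exact hj m hm
      · rw [hsdef, Finset.mem_Icc] at hm
        have h1 : (B : ℝ) < (m.natAbs : ℝ) := by
          have : B < m.natAbs := by omega
          exact_mod_cast this
        have hc1 : C ≤ (B : ℝ) * ε := (div_le_iff₀ hε).mp (Nat.le_ceil (C / ε))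
        have h2 : C ≤ ε * (m.natAbs : ℝ) := by nlinarith
        calc Q m ≤ C - ε * m.natAbs := hQb m
          _ ≤ 0 := by linarith
          _ = Q 0 := hQ0.symm
          _ ≤ Q j := hj 0 h0s
    refine ⟨o j, fun n => ?_⟩
    constructor
    · rw [hSp j n]
      have h1 := hjall (j + n)
      simp only [hQdef] at h1
      have h2 : (((j + n).natAbs : ℕ) : ℝ) ≤ ((j.natAbs : ℕ) : ℝ) + n := by
        have h3 : (j + (n : ℤ)).natAbs ≤ j.natAbs + n := by
          have := Int.natAbs_add_le j (n : ℤ)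
          simpa using this
        exact_mod_cast h3
      nlinarith
    · rw [hoiter', hSp (j - n) n]
      have hc : (j - n) + n = j := by ring
      rw [hc]
      have h1 := hjall (j - n)
      simp only [hQdef] at h1
      have h2 : (((j - n).natAbs : ℕ) : ℝ) ≤ ((j.natAbs : ℕ) : ℝ) + n := by
        have h3 : (j - (n : ℤ)).natAbs ≤ j.natAbs + n := by
          have := Int.natAbs_sub_le j (n : ℤ)
          simpa using this
        exact_mod_cast h3
      nlinarith
  -- compactness
  set Cs : ℕ → Set K := fun k => {x | ∀ n : ℕ,
    ‖wn n x‖ ≤ Real.exp ((n : ℝ) / (k + 1)) ∧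
    Real.exp (-((n : ℝ) / (k + 1))) ≤ ‖wn n ((⇑φ.symm)^[n] x)‖} with hCsdef
  have hne : ∀ k, (Cs k).Nonempty := by
    intro k
    obtain ⟨x, hx⟩ := key (1 / (2 * ((k : ℝ) + 1))) (by positivity)
    refine ⟨x, fun n => ?_⟩
    obtain ⟨h1, h2⟩ := hx n
    have heq : 2 * (1 / (2 * ((k : ℝ) + 1))) * n = (n : ℝ) / (k + 1) := by
      field_simp
    rw [heq] at h1 h2
    constructor
    · rw [← Real.exp_log (hwn_pos n x)]
      exact Real.exp_le_exp.mpr h1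
    · rw [← Real.exp_log (hwn_pos n ((⇑φ.symm)^[n] x))]
      exact Real.exp_le_exp.mpr h2
  have hcl : ∀ k, IsClosed (Cs k) := by
    intro k
    have heq : Cs k = ⋂ n : ℕ, ({x | ‖wn n x‖ ≤ Real.exp ((n : ℝ) / (k + 1))} ∩
        {x | Real.exp (-((n : ℝ) / (k + 1))) ≤ ‖wn n ((⇑φ.symm)^[n] x)‖}) := by
      ext x
      simp only [hCsdef, Set.mem_setOf_eq, Set.mem_iInter, Set.mem_inter_iff]
    rw [heq]
    refine isClosed_iInter fun n => IsClosed.inter ?_ ?_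
    · exact isClosed_le ((wn n).continuous.norm) continuous_const
    · exact isClosed_le continuous_const
        (((wn n).continuous.comp (φ.symm.continuous.iterate n)).norm)
  have hdec : ∀ k, Cs (k + 1) ⊆ Cs k := by
    intro k x hx n
    obtain ⟨h1, h2⟩ := hx n
    have hmono : (n : ℝ) / ((k + 1 : ℕ) + 1) ≤ (n : ℝ) / (k + 1) := by
      gcongr
      push_cast; linarith
    exact ⟨h1.trans (Real.exp_le_exp.mpr hmono),
      (Real.exp_le_exp.mpr (neg_le_neg hmono)).trans h2⟩
  obtain ⟨x, hx⟩ := IsCompact.nonempty_iInter_of_sequence_nonempty_isCompact_isClosed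
    Cs hdec hne ((hcl 0).isCompact) hcl
  refine ⟨x, fun n => ?_⟩
  have hxk : ∀ k : ℕ, ‖wn n x‖ ≤ Real.exp ((n : ℝ) / (k + 1)) ∧
      Real.exp (-((n : ℝ) / (k + 1))) ≤ ‖wn n ((⇑φ.symm)^[n] x)‖ :=
    fun k => (Set.mem_iInter.mp hx k) n
  have hlim0 : Tendsto (fun k : ℕ => (n : ℝ) / (k + 1)) atTop (𝓝 0) := by
    apply Tendsto.div_atTop tendsto_const_nhds
    exact tendsto_atTop_add_const_right _ 1 tendsto_natCast_atTop_atTop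
  have hlim : Tendsto (fun k : ℕ => Real.exp ((n : ℝ) / (k + 1))) atTop (𝓝 1) := by
    have := (Real.continuous_exp.tendsto 0).comp hlim0
    simpa [Function.comp_def] using this
  have hlim' : Tendsto (fun k : ℕ => Real.exp (-((n : ℝ) / (k + 1)))) atTop (𝓝 1) := by
    have h0 : Tendsto (fun k : ℕ => -((n : ℝ) / (k + 1))) atTop (𝓝 0) := by
      simpa using hlim0.neg
    have := (Real.continuous_exp.tendsto 0).comp h0
    simpa [Function.comp_def] using this
  constructor
  · exact ge_of_tendsto hlim (Eventually.of_forall fun k => (hxk k).1)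
  · exact le_of_tendsto hlim' (Eventually.of_forall fun k => (hxk k).2)
end

section
/- Let K be a compact Hausdorff space, φ a homeomorphism of K, s ∈ K a non-φ-periodic point, λ ≠ 0, and w ∈ C(K) such that the bilateral series μ = ∑_{n≥0} λ^{−n} w_n(s) δ_{φ^n(s)} + ∑_{n≥1} λ^n δ_{φ^{−n}(s)} / w_n(φ^{−n}(s)) converges absolutely in the dual of C(K) (all denominators nonzero). Then μ is an eigenvector of the adjoint T′ of the weighted composition operator T g = w·(g∘φ): T′μ = λ μ. -/
set_option maxHeartbeats 1000000
set_option synthInstance.maxHeartbeats 1000000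

open Filter in
private lemma aux16 {K : Type*} [TopologicalSpace K] [CompactSpace K] [T2Space K]
    (w : C(K, ℂ)) (T : C(K, ℂ) →L[ℂ] C(K, ℂ)) (f : K → K)
    (hT : ∀ (g : C(K, ℂ)) (t : K), T g t = w t * g (f t))
    (lam : ℂ) (x y : ℕ → K) (a b : ℕ → ℂ)
    (hx : ∀ n, x (n + 1) = f (x n))
    (hy0 : f (y 0) = x 0)
    (hys : ∀ n, f (y (n + 1)) = y n)
    (ha0 : a 0 = 1)
    (hA : ∀ n, a n * w (x n) = lam * a (n + 1))
    (hB0 : b 0 * w (y 0) = lam)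
    (hBs : ∀ n, b (n + 1) * w (y (n + 1)) = lam * b n)
    (hna : Summable fun n => ‖a n‖) (hnb : Summable fun n => ‖b n‖)
    (hxne : ∀ n, 0 < n → x n ≠ x 0) (hyne : ∀ n, y n ≠ x 0)
    (μ : C(K, ℂ) →L[ℂ] ℂ)
    (hμ : μ = (∑' n : ℕ, a n • ContinuousMap.evalCLM ℂ (x n)) +
              (∑' n : ℕ, b n • ContinuousMap.evalCLM ℂ (y n))) :
    μ.comp T = lam • μ ∧ μ ≠ 0 := by
  classical
  have hev : ∀ t : K, ‖ContinuousMap.evalCLM (M := ℂ) ℂ t‖ ≤ 1 := by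
    intro t
    refine ContinuousLinearMap.opNorm_le_bound _ zero_le_one fun g => ?_
    simpa using g.norm_coe_le_norm t
  have SA : Summable fun n : ℕ => a n • ContinuousMap.evalCLM (M := ℂ) ℂ (x n) := by
    refine Summable.of_norm_bounded hna fun n => ?_
    refine (ContinuousLinearMap.opNorm_smul_le (a n) _).trans ?_
    calc ‖a n‖ * ‖ContinuousMap.evalCLM (M := ℂ) ℂ (x n)‖
        ≤ ‖a n‖ * 1 := mul_le_mul_of_nonneg_left (hev _) (norm_nonneg _)
      _ = ‖a n‖ := mul_one _
  have SB : Summable fun n : ℕ => b n • ContinuousMap.evalCLM (M := ℂ) ℂ (y n) := by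
    refine Summable.of_norm_bounded hnb fun n => ?_
    refine (ContinuousLinearMap.opNorm_smul_le (b n) _).trans ?_
    calc ‖b n‖ * ‖ContinuousMap.evalCLM (M := ℂ) ℂ (y n)‖
        ≤ ‖b n‖ * 1 := mul_le_mul_of_nonneg_left (hev _) (norm_nonneg _)
      _ = ‖b n‖ := mul_one _
  have SAg : ∀ g : C(K, ℂ), Summable fun n : ℕ => a n * g (x n) := by
    intro g
    refine Summable.of_norm_bounded (hna.mul_right ‖g‖) fun n => ?_
    rw [norm_mul]
    exact mul_le_mul_of_nonneg_left (g.norm_coe_le_norm _) (norm_nonneg _)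
  have SBg : ∀ g : C(K, ℂ), Summable fun n : ℕ => b n * g (y n) := by
    intro g
    refine Summable.of_norm_bounded (hnb.mul_right ‖g‖) fun n => ?_
    rw [norm_mul]
    exact mul_le_mul_of_nonneg_left (g.norm_coe_le_norm _) (norm_nonneg _)
  have hμapp : ∀ g : C(K, ℂ),
      μ g = (∑' n : ℕ, a n * g (x n)) + (∑' n : ℕ, b n * g (y n)) := by
    intro g
    have e1 : (∑' n : ℕ, a n • ContinuousMap.evalCLM ℂ (x n)) g
        = ∑' n : ℕ, a n * g (x n) := by
      have := ContinuousLinearMap.map_tsum (ContinuousLinearMap.apply ℂ ℂ g) SA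
      simpa using this
    have e2 : (∑' n : ℕ, b n • ContinuousMap.evalCLM ℂ (y n)) g
        = ∑' n : ℕ, b n * g (y n) := by
      have := ContinuousLinearMap.map_tsum (ContinuousLinearMap.apply ℂ ℂ g) SB
      simpa using this
    rw [hμ, ContinuousLinearMap.add_apply, e1, e2]
  constructor
  · -- eigenvalue equation
    ext g
    have hTg : ∀ t, (T g) t = w t * g (f t) := hT g
    have key1 : (∑' n : ℕ, a n * (T g) (x n))
        = lam * (∑' n : ℕ, a n * g (x n)) - lam * g (x 0) := by
      have h1 : ∀ n, a n * (T g) (x n) = lam * (a (n + 1) * g (x (n + 1))) := by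
        intro n
        rw [hTg, ← hx, ← mul_assoc, hA, mul_assoc]
      have hshift : Summable fun n : ℕ => a (n + 1) * g (x (n + 1)) :=
        (summable_nat_add_iff 1).2 (SAg g)
      calc (∑' n : ℕ, a n * (T g) (x n))
          = ∑' n : ℕ, lam * (a (n + 1) * g (x (n + 1))) := by
            exact tsum_congr h1
        _ = lam * ∑' n : ℕ, a (n + 1) * g (x (n + 1)) := tsum_mul_left
        _ = lam * ((∑' n : ℕ, a n * g (x n)) - a 0 * g (x 0)) := by
            rw [(SAg g).tsum_eq_zero_add]; ring
        _ = lam * (∑' n : ℕ, a n * g (x n)) - lam * g (x 0) := by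
            rw [ha0]; ring
    have key2 : (∑' n : ℕ, b n * (T g) (y n))
        = lam * g (x 0) + lam * (∑' n : ℕ, b n * g (y n)) := by
      have hG : Summable fun n : ℕ => b n * (T g) (y n) := by
        refine Summable.of_norm_bounded (hnb.mul_right ‖T g‖) fun n => ?_
        rw [norm_mul]
        exact mul_le_mul_of_nonneg_left ((T g).norm_coe_le_norm _) (norm_nonneg _)
      rw [hG.tsum_eq_zero_add]
      have hG0 : b 0 * (T g) (y 0) = lam * g (x 0) := by
        rw [hTg, hy0, ← mul_assoc, hB0]
      have hGs : ∀ n, b (n + 1) * (T g) (y (n + 1)) = lam * (b n * g (y n)) := by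
        intro n
        rw [hTg, hys, ← mul_assoc, hBs, mul_assoc]
      rw [hG0]
      congr 1
      calc (∑' n : ℕ, b (n + 1) * (T g) (y (n + 1)))
          = ∑' n : ℕ, lam * (b n * g (y n)) := tsum_congr hGs
        _ = lam * ∑' n : ℕ, b n * g (y n) := tsum_mul_left
    have : μ (T g) = lam * μ g := by
      rw [hμapp (T g), hμapp g, key1, key2]; ring
    simpa using this
  · -- μ ≠ 0
    have tA : Tendsto (fun i => ∑' k, ‖a (k + i)‖) atTop (nhds 0) :=
      tendsto_sum_nat_add fun n => ‖a n‖
    have tB : Tendsto (fun i => ∑' k, ‖b (k + i)‖) atTop (nhds 0) :=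
      tendsto_sum_nat_add fun n => ‖b n‖
    have h4 : (0 : ℝ) < 1 / 4 := by norm_num
    obtain ⟨N, hN⟩ := ((tA.eventually_lt_const h4).and
      ((tB.eventually_lt_const h4).and (eventually_ge_atTop 1))).exists
    obtain ⟨hNa, hNb, hN1⟩ := hN
    -- Urysohn function
    set Fs : Set K := (↑((Finset.Ioo 0 N).image x ∪ (Finset.range N).image y) : Set K)
      with hFs
    have hclosed : IsClosed Fs := (Finset.finite_toSet _).isClosed
    have hnotmem : x 0 ∉ Fs := by
      intro hmem
      rw [hFs] at hmem
      simp only [Finset.coe_union, Set.mem_union, Finset.coe_image, Set.mem_image,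
        Finset.mem_coe, Finset.mem_Ioo, Finset.mem_range] at hmem
      rcases hmem with ⟨i, ⟨hi, _⟩, hxi⟩ | ⟨i, _, hyi⟩
      · exact hxne i hi hxi
      · exact hyne i hyi
    have hdisj : Disjoint Fs {x 0} := Set.disjoint_singleton_right.2 hnotmem
    obtain ⟨f0, hf0, hf1, hf01⟩ :=
      exists_continuous_zero_one_of_isClosed hclosed isClosed_singleton hdisj
    set g : C(K, ℂ) := ⟨fun t => (f0 t : ℂ), Complex.continuous_ofReal.comp f0.continuous⟩
      with hg
    have hg1 : g (x 0) = 1 := by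
      have := hf1 (Set.mem_singleton (x 0))
      simp only [hg, ContinuousMap.coe_mk]
      rw [show f0 (x 0) = 1 from this]
      norm_num
    have hgx : ∀ i, 0 < i → i < N → g (x i) = 0 := by
      intro i h0 hiN
      have : x i ∈ Fs := by
        rw [hFs]
        simp only [Finset.coe_union, Set.mem_union, Finset.coe_image, Set.mem_image,
          Finset.mem_coe, Finset.mem_Ioo, Finset.mem_range]
        exact Or.inl ⟨i, ⟨h0, hiN⟩, rfl⟩
      have := hf0 this
      simp only [hg, ContinuousMap.coe_mk]
      rw [show f0 (x i) = 0 from this]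
      norm_num
    have hgy : ∀ i, i < N → g (y i) = 0 := by
      intro i hiN
      have : y i ∈ Fs := by
        rw [hFs]
        simp only [Finset.coe_union, Set.mem_union, Finset.coe_image, Set.mem_image,
          Finset.mem_coe, Finset.mem_Ioo, Finset.mem_range]
        exact Or.inr ⟨i, hiN, rfl⟩
      have := hf0 this
      simp only [hg, ContinuousMap.coe_mk]
      rw [show f0 (y i) = 0 from this]
      norm_num
    have hgle : ∀ t, ‖g t‖ ≤ 1 := by
      intro t
      have ht := hf01 t
      simp only [hg, ContinuousMap.coe_mk, Complex.norm_real]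
      rw [Real.norm_eq_abs, abs_of_nonneg ht.1]
      exact ht.2
    -- compute μ g
    have hsum1 :
        (∑ i ∈ Finset.range N, a i * g (x i)) + (∑' n, a (n + N) * g (x (n + N)))
          = ∑' n, a n * g (x n) := (SAg g).sum_add_tsum_nat_add N
    have hsum2 :
        (∑ i ∈ Finset.range N, b i * g (y i)) + (∑' n, b (n + N) * g (y (n + N)))
          = ∑' n, b n * g (y n) := (SBg g).sum_add_tsum_nat_add N
    have hhead1 : (∑ i ∈ Finset.range N, a i * g (x i)) = 1 := by
      rw [Finset.sum_eq_single_of_mem 0 (Finset.mem_range.2 hN1)]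
      · rw [ha0, hg1, one_mul]
      · intro i hi hne
        rw [hgx i (Nat.pos_of_ne_zero hne) (Finset.mem_range.1 hi), mul_zero]
    have hhead2 : (∑ i ∈ Finset.range N, b i * g (y i)) = 0 := by
      refine Finset.sum_eq_zero fun i hi => ?_
      rw [hgy i (Finset.mem_range.1 hi), mul_zero]
    have htail1 : ‖∑' n, a (n + N) * g (x (n + N))‖ < 1 / 4 := by
      have hb : ∀ n : ℕ, ‖a (n + N) * g (x (n + N))‖ ≤ ‖a (n + N)‖ := by
        intro n
        rw [norm_mul]
        calc ‖a (n + N)‖ * ‖g (x (n + N))‖ ≤ ‖a (n + N)‖ * 1 :=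
          mul_le_mul_of_nonneg_left (hgle _) (norm_nonneg _)
        _ = ‖a (n + N)‖ := mul_one _
      have hsa : Summable fun n : ℕ => ‖a (n + N)‖ :=
        (summable_nat_add_iff N).2 hna
      calc ‖∑' n, a (n + N) * g (x (n + N))‖ ≤ ∑' n, ‖a (n + N)‖ :=
            tsum_of_norm_bounded hsa.hasSum hb
        _ < 1 / 4 := by
            have : (∑' k, ‖a (k + N)‖) < 1 / 4 := hNa
            exact this
    have htail2 : ‖∑' n, b (n + N) * g (y (n + N))‖ < 1 / 4 := by
      have hb : ∀ n : ℕ, ‖b (n + N) * g (y (n + N))‖ ≤ ‖b (n + N)‖ := by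
        intro n
        rw [norm_mul]
        calc ‖b (n + N)‖ * ‖g (y (n + N))‖ ≤ ‖b (n + N)‖ * 1 :=
          mul_le_mul_of_nonneg_left (hgle _) (norm_nonneg _)
        _ = ‖b (n + N)‖ := mul_one _
      have hsb : Summable fun n : ℕ => ‖b (n + N)‖ :=
        (summable_nat_add_iff N).2 hnb
      calc ‖∑' n, b (n + N) * g (y (n + N))‖ ≤ ∑' n, ‖b (n + N)‖ :=
            tsum_of_norm_bounded hsb.hasSum hb
        _ < 1 / 4 := hNb
    have hμg : μ g = 1 + ((∑' n, a (n + N) * g (x (n + N)))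
        + (∑' n, b (n + N) * g (y (n + N)))) := by
      rw [hμapp g, ← hsum1, ← hsum2, hhead1, hhead2]
      ring
    have hμgne : μ g ≠ 0 := by
      intro h0
      rw [h0] at hμg
      have h1' : ‖(∑' n, a (n + N) * g (x (n + N)))
          + (∑' n, b (n + N) * g (y (n + N)))‖ = 1 := by
        have : (∑' n, a (n + N) * g (x (n + N)))
            + (∑' n, b (n + N) * g (y (n + N))) = -1 := by linear_combination -hμg
        rw [this]
        simp
      have h2' : ‖(∑' n, a (n + N) * g (x (n + N)))
          + (∑' n, b (n + N) * g (y (n + N)))‖ < 1 / 2 := by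
        calc ‖(∑' n, a (n + N) * g (x (n + N)))
            + (∑' n, b (n + N) * g (y (n + N)))‖
            ≤ ‖∑' n, a (n + N) * g (x (n + N))‖
              + ‖∑' n, b (n + N) * g (y (n + N))‖ := norm_add_le _ _
          _ < 1 / 4 + 1 / 4 := add_lt_add htail1 htail2
          _ = 1 / 2 := by norm_num
      rw [h1'] at h2'
      norm_num at h2'
    intro h0
    rw [h0] at hμgne
    simp at hμgne

/-- If the bilateral series of point masses
`μ = ∑_{n≥0} λ⁻ⁿ wₙ(s) δ_{φⁿ(s)} + ∑_{n≥1} λⁿ δ_{φ⁻ⁿ(s)} / wₙ(φ⁻ⁿ(s))`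
converges absolutely in `C(K)'`, with `s` not `φ`-periodic, then `μ` is a nonzero
eigenvector of the adjoint `T'` of the weighted composition operator `Tg = w·(g∘φ)`:
`T'μ = λμ`. -/
theorem stmt16 {K : Type*} [TopologicalSpace K] [CompactSpace K] [T2Space K]
    (φ : K ≃ₜ K) (w : C(K, ℂ))
    (T : C(K, ℂ) →L[ℂ] C(K, ℂ))
    (hT : ∀ (g : C(K, ℂ)) (t : K), T g t = w t * g (φ t))
    (wn : ℕ → C(K, ℂ))
    (hwn : ∀ (n : ℕ) (t : K), wn n t = ∏ i ∈ Finset.range n, w ((⇑φ)^[i] t))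
    (s : K) (hs : ∀ p : ℕ, 0 < p → (⇑φ)^[p] s ≠ s)
    (lam : ℂ) (hlam : lam ≠ 0)
    (hden : ∀ n : ℕ, wn (n + 1) ((⇑φ.symm)^[n + 1] s) ≠ 0)
    (h1 : Summable fun n : ℕ => ‖lam⁻¹ ^ n * wn n s‖)
    (h2 : Summable fun n : ℕ => ‖lam ^ (n + 1) / wn (n + 1) ((⇑φ.symm)^[n + 1] s)‖) :
    ∀ μ : C(K, ℂ) →L[ℂ] ℂ,
      μ = (∑' n : ℕ, (lam⁻¹ ^ n * wn n s) • ContinuousMap.evalCLM ℂ ((⇑φ)^[n] s)) +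
          (∑' n : ℕ, (lam ^ (n + 1) / wn (n + 1) ((⇑φ.symm)^[n + 1] s)) •
            ContinuousMap.evalCLM ℂ ((⇑φ.symm)^[n + 1] s)) →
      μ.comp T = lam • μ ∧ μ ≠ 0 := by
  intro μ hμ
  have hwn0 : ∀ t, wn 0 t = 1 := by intro t; simp [hwn]
  -- key product identities
  have hxsucc : ∀ n, wn (n + 1) s = wn n s * w ((⇑φ)^[n] s) := by
    intro n
    rw [hwn, hwn, Finset.prod_range_succ]
  have hkey : ∀ (n : ℕ) (t : K), wn (n + 1) t = w t * wn n (φ t) := by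
    intro n t
    rw [hwn, hwn, Finset.prod_range_succ', mul_comm]
    simp [Function.iterate_succ_apply]
  have hysucc : ∀ n : ℕ, φ ((⇑φ.symm)^[n + 1] s) = (⇑φ.symm)^[n] s := by
    intro n
    rw [Function.iterate_succ_apply', Homeomorph.apply_symm_apply]
  have hwy : ∀ n : ℕ, w ((⇑φ.symm)^[n + 1] s) ≠ 0 := by
    intro n hz
    exact hden n (by rw [hkey, hz, zero_mul])
  have hdeny' : ∀ n : ℕ, wn n ((⇑φ.symm)^[n] s) ≠ 0 := by
    intro n
    cases n with
    | zero => rw [hwn0]; exact one_ne_zero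
    | succ m => exact hden m
  refine aux16 w T φ hT lam (fun n => (⇑φ)^[n] s) (fun n => (⇑φ.symm)^[n + 1] s)
    (fun n => lam⁻¹ ^ n * wn n s)
    (fun n => lam ^ (n + 1) / wn (n + 1) ((⇑φ.symm)^[n + 1] s))
    (fun n => Function.iterate_succ_apply' _ _ _)
    ?_ ?_ ?_ ?_ ?_ ?_ h1 h2 ?_ ?_ μ hμ
  · -- f (y 0) = x 0
    simp
  · -- f (y (n+1)) = y n
    intro n
    exact hysucc (n + 1)
  · -- a 0 = 1
    simp [hwn0]
  · -- a n * w (x n) = lam * a (n+1)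
    intro n
    have h := hxsucc n
    field_simp [pow_succ]
    rw [h]
    have hl : lam * (1 / lam) = 1 := mul_one_div_cancel hlam
    linear_combination (-((1 / lam) ^ n * (wn n s * w ((⇑φ)^[n] s)))) * hl
  · -- b 0 * w (y 0) = lam
    have h : wn 1 ((⇑φ.symm)^[1] s) = w ((⇑φ.symm)^[1] s) := by
      rw [hkey, hysucc 0]
      simp [hwn0]
    have hW : w ((⇑φ.symm)^[0 + 1] s) ≠ 0 := by rw [← h]; exact hden 0
    rw [h, div_mul_cancel₀ _ hW, pow_one]
  · -- b (n+1) * w (y (n+1)) = lam * b n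
    intro n
    have h : wn (n + 2) ((⇑φ.symm)^[n + 2] s) =
        w ((⇑φ.symm)^[n + 2] s) * wn (n + 1) ((⇑φ.symm)^[n + 1] s) := by
      rw [hkey, hysucc (n + 1)]
    have hW := hwy (n + 1)
    have hD := hden n
    rw [show n + 1 + 1 = n + 2 from rfl] at hW ⊢
    rw [h, mul_comm (w ((⇑φ.symm)^[n + 2] s)) (wn (n + 1) ((⇑φ.symm)^[n + 1] s)),
      ← div_div, div_mul_cancel₀ _ hW, pow_succ, pow_succ]
    field_simp [hD]
  · -- x n ≠ x 0 for n > 0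
    intro n hn
    simpa using hs n hn
  · -- y n ≠ x 0
    intro n hxy
    simp only [Function.iterate_zero_apply] at hxy
    apply hs (n + 1) (Nat.succ_pos n)
    calc (⇑φ)^[n + 1] s = (⇑φ)^[n + 1] ((⇑φ.symm)^[n + 1] s) := by rw [hxy]
      _ = s := by
          have : Function.LeftInverse (⇑φ) (⇑φ.symm) := φ.apply_symm_apply
          exact this.iterate (n + 1) s
end

section
/- Let X be a complex Banach space, D ⊂ ℂ open, and R : D → B(X) a function such that for every x ∈ X and every continuous linear functional G on X the scalar function λ ↦ G(R(λ)x) is analytic on D, and such that R(λ) = (λI − T)⁻¹ on D ∖ 𝕋 for a bounded operator T with σ(T) ⊆ 𝕋. Then D ∩ σ(T) = ∅, i.e. λI − T is invertible for all λ ∈ D. -/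
lemma sphere_limit_aux {D : Set ℂ} (hD : IsOpen D) {l : ℂ} (hl : l ∈ D) (hn : ‖l‖ = 1)
    {f : ℂ → ℂ} (hf : ContinuousAt f l) {c : ℂ}
    (h : ∀ z ∈ D, ‖z‖ ≠ 1 → f z = c) : f l = c := by
  set u : ℕ → ℂ := fun n => (1 + 1 / ((n : ℝ) + 1) : ℝ) • l with hu
  have htend : Filter.Tendsto u Filter.atTop (nhds l) := by
    have h1 : Filter.Tendsto (fun n : ℕ => (1 + 1 / ((n : ℝ) + 1) : ℝ)) Filter.atTop (nhds 1) := by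
      have : Filter.Tendsto (fun n : ℕ => 1 / ((n : ℝ) + 1)) Filter.atTop (nhds 0) :=
        tendsto_one_div_add_atTop_nhds_zero_nat
      simpa using (tendsto_const_nhds (x := (1:ℝ)) (f := Filter.atTop)).add this
    have := h1.smul (tendsto_const_nhds (x := l))
    rw [one_smul] at this
    exact this
  have hmem : ∀ᶠ n in Filter.atTop, u n ∈ D := htend.eventually (hD.mem_nhds hl)
  have hne : ∀ n, ‖u n‖ ≠ 1 := by
    intro n
    have hpos : (0:ℝ) < 1 / ((n : ℝ) + 1) := by positivity
    have : ‖u n‖ = (1 + 1 / ((n : ℝ) + 1)) := by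
      rw [hu]
      rw [norm_smul, hn, mul_one, Real.norm_eq_abs,
        abs_of_pos (by positivity : (0:ℝ) < 1 + 1 / ((n:ℝ)+1))]
    rw [this]; linarith
  have hfc : ∀ᶠ n in Filter.atTop, f (u n) = c :=
    hmem.mono (fun n hnD => h _ hnD (hne n))
  have h1 : Filter.Tendsto (fun n => f (u n)) Filter.atTop (nhds (f l)) := hf.tendsto.comp htend
  have h2 : Filter.Tendsto (fun n => f (u n)) Filter.atTop (nhds c) := by
    exact Filter.Tendsto.congr' (hfc.mono fun n e => e.symm) tendsto_const_nhds
  exact tendsto_nhds_unique h1 h2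

/-- Weak analyticity implies norm analyticity for resolvents: if `R : D → B(X)` is
weakly analytic on an open set `D` and coincides with the resolvent of `T` on `D ∖ 𝕋`,
where `σ(T) ⊆ 𝕋`, then `D` contains no spectral point of `T`. -/
theorem stmt18 {X : Type*} [NormedAddCommGroup X] [NormedSpace ℂ X] [CompleteSpace X]
    (T : X →L[ℂ] X) (hσ : spectrum ℂ T ⊆ Metric.sphere (0 : ℂ) 1)
    (D : Set ℂ) (hD : IsOpen D)
    (R : ℂ → X →L[ℂ] X)
    (hweak : ∀ (x : X) (G : X →L[ℂ] ℂ), DifferentiableOn ℂ (fun z => G (R z x)) D)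
    (hres : ∀ z ∈ D, ‖z‖ ≠ 1 →
      R z * (z • (1 : X →L[ℂ] X) - T) = 1 ∧ (z • (1 : X →L[ℂ] X) - T) * R z = 1) :
    D ∩ spectrum ℂ T = ∅ := by
  rw [Set.eq_empty_iff_forall_notMem]
  rintro l ⟨hlD, hlσ⟩
  have hnorm : ‖l‖ = 1 := by simpa using hσ hlσ
  -- left inverse at l
  have hleft : R l * (l • (1 : X →L[ℂ] X) - T) = 1 := by
    ext x
    apply (NormedSpace.eq_iff_forall_dual_eq ℂ).2
    intro G
    set f : ℂ → ℂ := fun z => z * G (R z x) - G (R z (T x)) with hf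
    have hdiff : DifferentiableOn ℂ f D :=
      ((differentiableOn_id).mul (hweak x G)).sub (hweak (T x) G)
    have hcont : ContinuousAt f l :=
      (hdiff.differentiableAt (hD.mem_nhds hlD)).continuousAt
    have heq : ∀ z ∈ D, ‖z‖ ≠ 1 → f z = G x := by
      intro z hz hz1
      have := congrArg (fun A : X →L[ℂ] X => G (A x)) (hres z hz hz1).1
      simpa [hf, map_sub, map_smul, smul_eq_mul, mul_comm] using this
    have := sphere_limit_aux hD hlD hnorm hcont heq
    simpa [hf, map_sub, map_smul, smul_eq_mul, mul_comm] using this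
  have hright : (l • (1 : X →L[ℂ] X) - T) * R l = 1 := by
    ext x
    apply (NormedSpace.eq_iff_forall_dual_eq ℂ).2
    intro G
    set f : ℂ → ℂ := fun z => z * G (R z x) - (G.comp T) (R z x) with hf
    have hdiff : DifferentiableOn ℂ f D :=
      ((differentiableOn_id).mul (hweak x G)).sub (hweak x (G.comp T))
    have hcont : ContinuousAt f l :=
      (hdiff.differentiableAt (hD.mem_nhds hlD)).continuousAt
    have heq : ∀ z ∈ D, ‖z‖ ≠ 1 → f z = G x := by
      intro z hz hz1
      have := congrArg (fun A : X →L[ℂ] X => G (A x)) (hres z hz hz1).2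
      simpa [hf, map_sub, map_smul, smul_eq_mul, mul_comm] using this
    have := sphere_limit_aux hD hlD hnorm hcont heq
    simpa [hf, map_sub, map_smul, smul_eq_mul, mul_comm] using this
  have : IsUnit ((algebraMap ℂ (X →L[ℂ] X)) l - T) := by
    rw [Algebra.algebraMap_eq_smul_one]
    exact ⟨⟨_, R l, hright, hleft⟩, rfl⟩
  exact (spectrum.mem_iff.mp hlσ) this
end
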